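/- Let R be a commutative ring, k ≥ 2, and let S = {y₁ < y₂ < ⋯ < y_n} be a gcd-closed set of positive integers (i.e., gcd(y_i, y_j) ∈ S for all i, j). Let F : ℕ⁺ → R and write f = F ∗ μ for its Dirichlet-Möbius inverse, so f(d) = ∑_{e ∣ d} F(e) μ(d/e). Then ∑_{(σ₂,…,σ_k) ∈ (S_n)^{k-1}} sign(σ₂)⋯sign(σ_k) · ∏_{i=1}^n F(gcd(y_i, y_{σ₂(i)}, …, y_{σ_k(i)})) = ∏_{i=1}^n ( ∑_{d ∣ y_i, d ∤ y_j for all j < i} f(d) ). -/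

import Mathlib

/-- The gcd `gcd(a, v 0, v 1, …)` of a positive integer `a` with a tuple `v` of positive
integers. -/
def gcdAll {p : ℕ} (a : ℕ) (v : Fin p → ℕ) : ℕ :=
  (List.ofFn v).foldr Nat.gcd a

open Finset Equiv

section Aux

open ArithmeticFunction

variable {R : Type*} [CommRing R] {n : ℕ}

private lemma dvd_foldr_gcd (d a : ℕ) (l : List ℕ) :
    d ∣ l.foldr Nat.gcd a ↔ d ∣ a ∧ ∀ x ∈ l, d ∣ x := by
  induction l with
  | nil => simp
  | cons x l ih =>
    simp only [List.foldr_cons, List.mem_cons]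
    constructor
    · intro h
      have hx : d ∣ x := h.trans (Nat.gcd_dvd_left _ _)
      have hr := h.trans (Nat.gcd_dvd_right _ _)
      rw [ih] at hr
      exact ⟨hr.1, fun z hz => hz.elim (fun e => e ▸ hx) (hr.2 z)⟩
    · rintro ⟨ha, hl⟩
      exact Nat.dvd_gcd (hl x (Or.inl rfl)) (ih.mpr ⟨ha, fun z hz => hl z (Or.inr hz)⟩)

private lemma dvd_gcdAll {q : ℕ} (d a : ℕ) (v : Fin q → ℕ) :
    d ∣ gcdAll a v ↔ d ∣ a ∧ ∀ j, d ∣ v j := by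
  rw [gcdAll, dvd_foldr_gcd]
  constructor
  · rintro ⟨ha, h⟩
    exact ⟨ha, fun j => h _ (by simp [List.mem_ofFn])⟩
  · rintro ⟨ha, h⟩
    refine ⟨ha, fun x hx => ?_⟩
    rw [List.mem_ofFn] at hx
    obtain ⟨j, hj⟩ := hx
    exact hj ▸ h j

private lemma gcdAll_mem {q : ℕ} (y : Fin n → ℕ)
    (hgcd : ∀ i j : Fin n, ∃ l : Fin n, Nat.gcd (y i) (y j) = y l)
    (i : Fin n) (v : Fin q → Fin n) :
    ∃ t : Fin n, gcdAll (y i) (fun j => y (v j)) = y t := by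
  rw [gcdAll]
  have main : ∀ l : List ℕ, (∀ x ∈ l, ∃ r, x = y r) →
      ∃ t, l.foldr Nat.gcd (y i) = y t := by
    intro l
    induction l with
    | nil => exact fun _ => ⟨i, rfl⟩
    | cons x l ih =>
      intro h
      obtain ⟨t, ht⟩ := ih (fun z hz => h z (List.mem_cons_of_mem _ hz))
      obtain ⟨r, hr⟩ := h x List.mem_cons_self
      rw [List.foldr_cons, ht, hr]
      exact hgcd r t
  apply main
  intro x hx
  rw [List.mem_ofFn] at hx
  obtain ⟨j, hj⟩ := hx
  exact ⟨v j, hj.symm⟩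

/-- The Möbius inverse of `F`. -/
private def ff (F : ℕ → R) (d : ℕ) : R :=
  ∑ e ∈ d.divisors, F e * ((moebius (d / e) : ℤ) : R)

/-- Möbius inversion: `∑_{d ∣ m} f d = F m` for `m > 0`. -/
private lemma sum_ff (F : ℕ → R) (m : ℕ) (hm : 0 < m) :
    ∑ d ∈ m.divisors, ff F d = F m := by
  classical
  set G : ArithmeticFunction R := ⟨fun x => if x = 0 then 0 else F x, rfl⟩ with hG
  set M : ArithmeticFunction R := ↑(moebius : ArithmeticFunction ℤ) with hM
  set Z : ArithmeticFunction R := ↑(ArithmeticFunction.zeta : ArithmeticFunction ℕ) with hZ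
  have hGapp : ∀ x : ℕ, x ≠ 0 → G x = F x := by
    intro x hx
    simp [hG, ArithmeticFunction.coe_mk, hx]
  have hff : ∀ d : ℕ, d ≠ 0 → ff F d = (G * M) d := by
    intro d hd
    rw [ArithmeticFunction.mul_apply, Nat.sum_divisorsAntidiagonal (fun a b => G a * M b)]
    unfold ff
    refine Finset.sum_congr rfl fun e he => ?_
    rw [Nat.mem_divisors] at he
    have he0 : e ≠ 0 := by
      rintro rfl
      exact hd (Nat.eq_zero_of_zero_dvd he.1)
    rw [hGapp e he0, hM, ArithmeticFunction.intCoe_apply]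
  have hzeta : (G * M) * Z = G := by
    rw [mul_assoc, hM, hZ, ArithmeticFunction.coe_moebius_mul_coe_zeta, mul_one]
  have hsum : ((G * M) * Z) m = ∑ d ∈ m.divisors, (G * M) d := by
    rw [hZ]
    exact ArithmeticFunction.coe_mul_zeta_apply
  rw [hzeta, hGapp m hm.ne'] at hsum
  rw [hsum]
  refine Finset.sum_congr rfl fun d hd => ?_
  rw [Nat.mem_divisors] at hd
  exact hff d (by rintro rfl; exact hd.2 (Nat.eq_zero_of_zero_dvd hd.1))

/-- The diagonal entries `c r`. -/
private def cc (F : ℕ → R) (y : Fin n → ℕ) (r : Fin n) : R :=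
  ∑ d ∈ (y r).divisors.filter (fun d => ∀ j : Fin n, j < r → ¬ d ∣ y j), ff F d

/-- The divisors of `y t` are partitioned by the sets defining `cc`. -/
private lemma sum_divisors_eq_sum_cc (F : ℕ → R) (y : Fin n → ℕ)
    (hpos : ∀ i, 0 < y i) (hmono : StrictMono y)
    (hgcd : ∀ i j : Fin n, ∃ l : Fin n, Nat.gcd (y i) (y j) = y l) (t : Fin n) :
    ∑ d ∈ (y t).divisors, ff F d
      = ∑ r ∈ univ.filter (fun r : Fin n => y r ∣ y t), cc F y r := by
  classical
  set A : Fin n → Finset ℕ :=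
    fun r => (y r).divisors.filter (fun d => ∀ j : Fin n, j < r → ¬ d ∣ y j) with hA
  have hmemA : ∀ (r : Fin n) (d : ℕ),
      d ∈ A r ↔ (d ∣ y r ∧ ∀ j : Fin n, j < r → ¬ d ∣ y j) := by
    intro r d
    simp [hA, Nat.mem_divisors, (hpos r).ne', and_assoc]
  have hunion : (univ.filter (fun r : Fin n => y r ∣ y t)).biUnion A = (y t).divisors := by
    ext d
    simp only [Finset.mem_biUnion, Finset.mem_filter, Finset.mem_univ, true_and,
      Nat.mem_divisors]
    constructor
    · rintro ⟨r, hrt, hd⟩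
      rw [hmemA] at hd
      exact ⟨hd.1.trans hrt, (hpos t).ne'⟩
    · rintro ⟨hdt, -⟩
      set s : Finset (Fin n) := univ.filter (fun r => d ∣ y r) with hs
      have hts : t ∈ s := by simp [hs, hdt]
      have hne : s.Nonempty := ⟨t, hts⟩
      set r : Fin n := s.min' hne with hr
      have hdr : d ∣ y r := by
        have := s.min'_mem hne
        simpa [hs] using this
      have hmin : ∀ j : Fin n, j < r → ¬ d ∣ y j := by
        intro j hj hdj
        have : r ≤ j := s.min'_le j (by simp [hs, hdj])
        exact absurd hj (not_lt.mpr this)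
      have hrt : y r ∣ y t := by
        obtain ⟨l, hl⟩ := hgcd r t
        have hdl : d ∣ y l := hl ▸ Nat.dvd_gcd hdr hdt
        have hlr : l ≤ r := by
          have h1 : y l ∣ y r := hl ▸ Nat.gcd_dvd_left _ _
          have := Nat.le_of_dvd (hpos r) h1
          exact (hmono.le_iff_le).mp this
        have hrl : r ≤ l := s.min'_le l (by simp [hs, hdl])
        have : l = r := le_antisymm hlr hrl
        rw [← this, ← hl]
        exact Nat.gcd_dvd_right _ _
      exact ⟨r, hrt, (hmemA r d).mpr ⟨hdr, hmin⟩⟩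
  have hdisj : (↑(univ.filter (fun r : Fin n => y r ∣ y t)) : Set (Fin n)).PairwiseDisjoint A := by
    intro r hr r' hr' hne
    refine Finset.disjoint_left.mpr fun d hd hd' => ?_
    rw [hmemA] at hd hd'
    rcases lt_or_gt_of_ne hne with h | h
    · exact hd'.2 r h hd.1
    · exact hd.2 r' h hd'.1
  rw [← hunion, Finset.sum_biUnion hdisj]
  rfl

/-- Key lemma: expansion of `F (gcd)` as a bilinear-type sum. -/
private lemma key_expand {q : ℕ} (F : ℕ → R) (y : Fin n → ℕ)
    (hpos : ∀ i, 0 < y i) (hmono : StrictMono y)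
    (hgcd : ∀ i j : Fin n, ∃ l : Fin n, Nat.gcd (y i) (y j) = y l)
    (i : Fin n) (v : Fin q → Fin n) :
    F (gcdAll (y i) (fun j => y (v j)))
      = ∑ r : Fin n, (if y r ∣ y i then (1 : R) else 0) *
          (∏ j, if y r ∣ y (v j) then (1 : R) else 0) * cc F y r := by
  classical
  obtain ⟨t, ht⟩ := gcdAll_mem y hgcd i v
  rw [ht]
  rw [← sum_ff F (y t) (hpos t), sum_divisors_eq_sum_cc F y hpos hmono hgcd t]
  rw [Finset.sum_filter]
  refine Finset.sum_congr rfl fun r _ => ?_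
  have hiff : y r ∣ y t ↔ y r ∣ y i ∧ ∀ j, y r ∣ y (v j) := by
    rw [← ht, dvd_gcdAll]
  by_cases h : y r ∣ y t
  · have h12 := hiff.mp h
    simp [h, h12.1, h12.2]
  · rw [if_neg h]
    rw [hiff] at h
    rcases not_and_or.mp h with h1 | h2
    · simp [h1]
    · simp [Finset.prod_boole, h2]

private lemma inj_le_eq_id (φ : Fin n → Fin n) (hle : ∀ i, φ i ≤ i)
    (hinj : Function.Injective φ) : φ = _root_.id := by
  have main : ∀ m : ℕ, ∀ i : Fin n, (i : ℕ) = m → φ i = i := by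
    intro m
    induction m using Nat.strong_induction_on with
    | _ m ih =>
      intro i him
      rcases lt_or_eq_of_le (hle i) with h | h
      · have hval : ((φ i : ℕ)) < m := him ▸ (Fin.lt_def.mp h)
        have hfix : φ (φ i) = φ i := ih _ hval (φ i) rfl
        exact absurd (hinj hfix) h.ne
      · exact h
  funext i
  exact main i i rfl

end Aux

/-- let `R` be a commutative ring, `k = p + 2 ≥ 2`, and `S = {y₁ < ⋯ < y_n}` a
gcd-closed set of positive integers.  Let `F : ℕ⁺ → R` and `f = F ∗ μ`, i.e.
`f(d) = ∑_{e ∣ d} F(e) μ(d/e)`.  Then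
`∑_{(σ₂,…,σ_k) ∈ (S_n)^{k-1}} sign(σ₂)⋯sign(σ_k) ∏ᵢ F(gcd(yᵢ, y_{σ₂(i)}, …, y_{σ_k(i)}))
 = ∏ᵢ ( ∑_{d ∣ yᵢ, d ∤ y_j for all j < i} f(d) )`. -/
theorem hyperdet_gcd_closed {R : Type*} [CommRing R] {n p : ℕ}
    (y : Fin n → ℕ) (hpos : ∀ i, 0 < y i) (hmono : StrictMono y)
    (hgcd : ∀ i j : Fin n, ∃ l : Fin n, Nat.gcd (y i) (y j) = y l)
    (F : ℕ → R) :
    ∑ σ : Fin (p + 1) → Equiv.Perm (Fin n),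
        ((∏ j, (Equiv.Perm.sign (σ j) : ℤ)) : ℤ) *
          ∏ i : Fin n, F (gcdAll (y i) (fun j => y (σ j i))) =
      ∏ i : Fin n,
        ∑ d ∈ (y i).divisors.filter (fun d => ∀ j : Fin n, j < i → ¬ d ∣ y j),
          ∑ e ∈ d.divisors, F e * ((ArithmeticFunction.moebius (d / e) : ℤ) : R) := by
  classical
  set E : Fin n → Fin n → R := fun i r => if y r ∣ y i then 1 else 0 with hE
  -- the E matrix is "lower triangular" unipotent
  have hE_diag : ∀ i, E i i = 1 := fun i => if_pos dvd_rfl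
  have hE_zero : ∀ i r : Fin n, i < r → E i r = 0 := by
    intro i r h
    have : ¬ y r ∣ y i := fun hdvd =>
      absurd (Nat.le_of_dvd (hpos i) hdvd) (not_le.mpr (hmono h))
    exact if_neg this
  -- D vanishes on non-injective φ
  have hD_zero : ∀ φ : Fin n → Fin n, ¬ Function.Injective φ →
      (∑ τ : Equiv.Perm (Fin n), ((Equiv.Perm.sign τ : ℤ) : R) * ∏ i, E (τ i) (φ i)) = 0 := by
    intro φ hφ
    rw [Function.not_injective_iff] at hφ
    obtain ⟨a, b, hab, hne⟩ := hφ
    have hdet : (∑ τ : Equiv.Perm (Fin n), ((Equiv.Perm.sign τ : ℤ) : R) * ∏ i, E (τ i) (φ i))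
        = Matrix.det (Matrix.of fun r s : Fin n => E r (φ s)) := by
      rw [Matrix.det_apply']
      rfl
    rw [hdet]
    exact Matrix.det_zero_of_column_eq hne fun k => by simp [hab]
  -- D id = 1
  have hD_id : (∑ τ : Equiv.Perm (Fin n), ((Equiv.Perm.sign τ : ℤ) : R) * ∏ i, E (τ i) i)
      = 1 := by
    rw [Finset.sum_eq_single (1 : Equiv.Perm (Fin n))]
    · simp [hE_diag]
    · intro τ _ hτ
      have hmoved : ∃ i, τ i < i := by
        by_contra hcon
        push_neg at hcon
        have hset : (univ.filter (fun i : Fin n => τ i ≠ i)).Nonempty := by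
          by_contra hemp
          rw [Finset.not_nonempty_iff_eq_empty, Finset.filter_eq_empty_iff] at hemp
          exact hτ (Equiv.ext fun i => by simpa using hemp (Finset.mem_univ i))
        set i := (univ.filter (fun i : Fin n => τ i ≠ i)).max' hset with hi
        have hi_mem : τ i ≠ i := by
          have := (univ.filter (fun i : Fin n => τ i ≠ i)).max'_mem hset
          simpa using this
        have h1 : i < τ i := lt_of_le_of_ne (hcon i) (Ne.symm hi_mem)
        have h2 : τ (τ i) ≠ τ i := fun h => hi_mem (τ.injective h)
        have : τ i ≤ i := Finset.le_max' _ _ (by simpa using h2)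
        exact absurd h1 (not_lt.mpr this)
      obtain ⟨i, hi⟩ := hmoved
      have hzero : (∏ j, E (τ j) j) = 0 :=
        Finset.prod_eq_zero (Finset.mem_univ i) (hE_zero _ _ hi)
      rw [hzero, mul_zero]
    · intro h
      exact absurd (Finset.mem_univ _) h
  -- rewrite each summand
  have step1 : ∀ σ : Fin (p + 1) → Equiv.Perm (Fin n),
      (((∏ j, (Equiv.Perm.sign (σ j) : ℤ)) : ℤ) : R) *
          ∏ i : Fin n, F (gcdAll (y i) (fun j => y (σ j i)))
        = ∑ φ : Fin n → Fin n,
            (∏ i, E i (φ i)) * (∏ i, cc F y (φ i)) *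
              ∏ j, (((Equiv.Perm.sign (σ j) : ℤ) : R) * ∏ i, E (σ j i) (φ i)) := by
    intro σ
    have hterm : ∀ i : Fin n, F (gcdAll (y i) (fun j => y (σ j i)))
        = ∑ r : Fin n, E i r * (∏ j, E (σ j i) r) * cc F y r := by
      intro i
      exact key_expand F y hpos hmono hgcd i (fun j => σ j i)
    rw [Finset.prod_congr rfl fun i _ => hterm i]
    rw [Fintype.prod_sum (fun (i : Fin n) (r : Fin n) =>
      E i r * (∏ j, E (σ j i) r) * cc F y r)]
    rw [Finset.mul_sum]
    refine Finset.sum_congr rfl fun φ _ => ?_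
    push_cast
    simp only [Finset.prod_mul_distrib]
    rw [Finset.prod_comm (f := fun (i : Fin n) (j : Fin (p + 1)) => E (σ j i) (φ i))]
    ring
  rw [Finset.sum_congr rfl fun σ _ => step1 σ]
  rw [Finset.sum_comm]
  -- collapse the inner sum over σ into a power
  have step2 : ∀ φ : Fin n → Fin n,
      (∑ σ : Fin (p + 1) → Equiv.Perm (Fin n),
          (∏ i, E i (φ i)) * (∏ i, cc F y (φ i)) *
            ∏ j, (((Equiv.Perm.sign (σ j) : ℤ) : R) * ∏ i, E (σ j i) (φ i)))
        = (∏ i, E i (φ i)) * (∏ i, cc F y (φ i)) *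
            (∑ τ : Equiv.Perm (Fin n),
              ((Equiv.Perm.sign τ : ℤ) : R) * ∏ i, E (τ i) (φ i)) ^ (p + 1) := by
    intro φ
    rw [← Finset.mul_sum]
    congr 1
    have hps : (∑ σ : Fin (p + 1) → Equiv.Perm (Fin n),
        ∏ j, (((Equiv.Perm.sign (σ j) : ℤ) : R) * ∏ i, E (σ j i) (φ i)))
        = ∏ _j : Fin (p + 1),
            ∑ τ : Equiv.Perm (Fin n),
              (((Equiv.Perm.sign τ : ℤ) : R) * ∏ i, E (τ i) (φ i)) :=
      (Fintype.prod_sum (fun (_j : Fin (p + 1)) (τ : Equiv.Perm (Fin n)) =>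
        ((Equiv.Perm.sign τ : ℤ) : R) * ∏ i, E (τ i) (φ i))).symm
    rw [hps, Finset.prod_const, Finset.card_univ, Fintype.card_fin]
  rw [Finset.sum_congr rfl fun φ _ => step2 φ]
  -- only φ = id survives
  rw [Finset.sum_eq_single (_root_.id : Fin n → Fin n)]
  · simp only [id_eq, hE_diag, Finset.prod_const_one, one_mul, hD_id, one_pow, mul_one]
    rfl
  · intro φ _ hφ
    by_cases hle : ∀ i, φ i ≤ i
    · have hninj : ¬ Function.Injective φ := fun hinj => hφ (inj_le_eq_id φ hle hinj)
      rw [hD_zero φ hninj, zero_pow (Nat.succ_ne_zero p), mul_zero]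
    · push_neg at hle
      obtain ⟨i, hi⟩ := hle
      have hnd : ¬ y (φ i) ∣ y i := fun hdvd =>
        absurd ((hmono.le_iff_le).mp (Nat.le_of_dvd (hpos i) hdvd)) (not_le.mpr hi)
      have hzero : E i (φ i) = 0 := if_neg hnd
      rw [Finset.prod_eq_zero (Finset.mem_univ i) hzero, zero_mul, zero_mul]
  · intro h
    exact absurd (Finset.mem_univ _) h
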